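/- Let n₁, n₂, H be positive integers and l, u ∈ ℝ^{n₁} with 0 ≤ l_i ≤ u_i for all i. Let W ∈ ℝ^{n₁×n₂} satisfy W_{ij} ≥ 0 for all i, j, rank(W) ≤ 1, and l_i ≤ Σ_{j=1}^{n₂} W_{ij} ≤ u_i for each i. Then there exist z ∈ {0,1}^{n₂×H}, γ ∈ ℝ^{n₂} with 0 ≤ γ_j ≤ 2^{−H} for all j, α ∈ ℝ^{n₁×n₂×H}, and β ∈ ℝ^{n₁×n₂} such that for all i ∈ {1,…,n₁}, j ∈ {1,…,n₂}, h ∈ {1,…,H}: (a) W_{ij} = Σ_{h=1}^{H} 2^{−h} α_{ijh} + β_{ij}; (b) l_i z_{jh} ≤ α_{ijh} ≤ u_i z_{jh}; (c) u_i z_{jh} + Σ_{j'=1}^{n₂} W_{ij'} − u_i ≤ α_{ijh} ≤ l_i z_{jh} + Σ_{j'=1}^{n₂} W_{ij'} − l_i; (d) l_i γ_j ≤ β_{ij} ≤ u_i γ_j; (e) u_i γ_j + 2^{−H}(Σ_{j'=1}^{n₂} W_{ij'} − u_i) ≤ β_{ij} ≤ l_i γ_j + 2^{−H}(Σ_{j'=1}^{n₂}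 W_{ij'} − l_i). -/
import Mathlib


/-- Containment U^row(l,u) ⊆ D̄^row(l,u,H): every entrywise nonnegative rank-1
matrix with row sums in [lᵢ, uᵢ] admits a binary discretization together with
the McCormick envelope constraints. Here h : Fin H encodes the index h+1 ∈ {1,…,H}. -/
-- Binary expansion lemma
lemma binexp (H : ℕ) : ∀ t : ℝ, 0 ≤ t → t ≤ 1 →
    ∃ (z : Fin H → ℝ) (γ : ℝ), (∀ h, z h = 0 ∨ z h = 1) ∧ 0 ≤ γ ∧ γ ≤ (2:ℝ)⁻¹ ^ H ∧
      t = (∑ h, (2:ℝ)⁻¹ ^ (h.val + 1) * z h) + γ := by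
  induction H with
  | zero =>
    intro t ht0 ht1
    exact ⟨fun h => h.elim0, t, fun h => h.elim0, ht0, by simpa using ht1, by simp⟩
  | succ H ih =>
    intro t ht0 ht1
    by_cases hc : (2:ℝ)⁻¹ ≤ t
    · obtain ⟨z, γ, hz, hγ0, hγ1, heq⟩ := ih (2*t - 1) (by linarith) (by linarith)
      refine ⟨Fin.cons 1 z, γ/2, ?_, by linarith, ?_, ?_⟩
      · intro h
        refine Fin.cases (Or.inr rfl) (fun i => hz i) h
      · rw [pow_succ]
        linarith
      · rw [Fin.sum_univ_succ]
        simp only [Fin.cons_zero, Fin.cons_succ, Fin.val_succ, Fin.val_zero]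
        have : ∑ i : Fin H, (2:ℝ)⁻¹ ^ (i.val + 1 + 1) * z i
            = (2:ℝ)⁻¹ * ∑ i : Fin H, (2:ℝ)⁻¹ ^ (i.val + 1) * z i := by
          rw [Finset.mul_sum]
          exact Finset.sum_congr rfl fun i _ => by ring
        rw [this]
        have := heq
        field_simp at this ⊢
        nlinarith [this]
    · obtain ⟨z, γ, hz, hγ0, hγ1, heq⟩ := ih (2*t) (by linarith) (by linarith)
      refine ⟨Fin.cons 0 z, γ/2, ?_, by linarith, ?_, ?_⟩
      · intro h
        refine Fin.cases (Or.inl rfl) (fun i => hz i) h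
      · rw [pow_succ]; linarith
      · rw [Fin.sum_univ_succ]
        simp only [Fin.cons_zero, Fin.cons_succ, Fin.val_succ, Fin.val_zero]
        have : ∑ i : Fin H, (2:ℝ)⁻¹ ^ (i.val + 1 + 1) * z i
            = (2:ℝ)⁻¹ * ∑ i : Fin H, (2:ℝ)⁻¹ ^ (i.val + 1) * z i := by
          rw [Finset.mul_sum]
          exact Finset.sum_congr rfl fun i _ => by ring
        rw [this]
        have := heq
        nlinarith [this]

-- rank ≤ 1 factorization
lemma rank1_factor {n₁ n₂ : ℕ} (W : Matrix (Fin n₁) (Fin n₂) ℝ) (hW : W.rank ≤ 1) :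
    ∃ (v : Fin n₁ → ℝ) (a : Fin n₂ → ℝ), ∀ i j, W i j = v i * a j := by
  rw [Matrix.rank] at hW
  rw [Submodule.finrank_le_one_iff_isPrincipal] at hW
  obtain ⟨v, hv⟩ := hW
  have hcol : ∀ j : Fin n₂, ∃ c : ℝ, (fun i => W i j) = c • v := by
    intro j
    have hmem : (fun i => W i j) ∈ LinearMap.range W.mulVecLin := by
      refine ⟨Pi.single j 1, ?_⟩
      ext i
      simp [Matrix.mulVecLin, Matrix.mulVec, dotProduct, Pi.single_apply]
    rw [hv, Submodule.mem_span_singleton] at hmem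
    obtain ⟨c, hc⟩ := hmem
    exact ⟨c, hc.symm⟩
  choose a ha using hcol
  refine ⟨v, a, fun i j => ?_⟩
  have := congrFun (ha j) i
  simp at this
  rw [this]; ring


theorem statement18 (n₁ n₂ H : ℕ) (hn₁ : 0 < n₁) (hn₂ : 0 < n₂) (hH : 0 < H)
    (l u : Fin n₁ → ℝ) (hl : ∀ i, 0 ≤ l i) (hlu : ∀ i, l i ≤ u i)
    (W : Matrix (Fin n₁) (Fin n₂) ℝ)
    (hWpos : ∀ i j, 0 ≤ W i j) (hWrank : W.rank ≤ 1)
    (hWrow : ∀ i, l i ≤ ∑ j, W i j ∧ ∑ j, W i j ≤ u i) :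
    ∃ (z : Fin n₂ → Fin H → ℝ) (γ : Fin n₂ → ℝ)
      (α : Fin n₁ → Fin n₂ → Fin H → ℝ) (β : Fin n₁ → Fin n₂ → ℝ),
      (∀ j h, z j h = 0 ∨ z j h = 1) ∧
      (∀ j, 0 ≤ γ j ∧ γ j ≤ (2 : ℝ)⁻¹ ^ H) ∧
      (∀ i j, W i j = (∑ h, (2 : ℝ)⁻¹ ^ (h.val + 1) * α i j h) + β i j) ∧
      (∀ i j h, l i * z j h ≤ α i j h ∧ α i j h ≤ u i * z j h) ∧
      (∀ i j h,
        u i * z j h + (∑ j', W i j') - u i ≤ α i j h ∧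
        α i j h ≤ l i * z j h + (∑ j', W i j') - l i) ∧
      (∀ i j, l i * γ j ≤ β i j ∧ β i j ≤ u i * γ j) ∧
      (∀ i j,
        u i * γ j + (2 : ℝ)⁻¹ ^ H * ((∑ j', W i j') - u i) ≤ β i j ∧
        β i j ≤ l i * γ j + (2 : ℝ)⁻¹ ^ H * ((∑ j', W i j') - l i)) := by
  -- row sums
  set s : Fin n₁ → ℝ := fun i => ∑ j, W i j with hs
  have hs0 : ∀ i, 0 ≤ s i := fun i => Finset.sum_nonneg fun j _ => hWpos i j
  have hsl : ∀ i, l i ≤ s i := fun i => (hWrow i).1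
  have hsu : ∀ i, s i ≤ u i := fun i => (hWrow i).2
  -- factor W i j = s i * t j with t j ∈ [0,1]
  obtain ⟨v, a, hva⟩ := rank1_factor W hWrank
  have ht : ∃ t : Fin n₂ → ℝ, (∀ j, 0 ≤ t j ∧ t j ≤ 1) ∧ ∀ i j, W i j = s i * t j := by
    by_cases hex : ∃ i₀, 0 < s i₀
    · obtain ⟨i₀, hi₀⟩ := hex
      refine ⟨fun j => W i₀ j / s i₀, fun j => ⟨div_nonneg (hWpos i₀ j) (hs0 i₀), ?_⟩, ?_⟩
      · rw [div_le_one hi₀]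
        exact Finset.single_le_sum (fun j' _ => hWpos i₀ j') (Finset.mem_univ j)
      · intro i j
        have key : W i j * s i₀ = W i₀ j * s i := by
          simp only [hs]
          rw [Finset.mul_sum, Finset.mul_sum]
          refine Finset.sum_congr rfl fun j' _ => ?_
          rw [hva i j, hva i₀ j', hva i₀ j, hva i j']
          ring
        field_simp
        linarith [key]
    · push_neg at hex
      have hsz : ∀ i, s i = 0 := fun i => le_antisymm (hex i) (hs0 i)
      refine ⟨fun _ => 0, fun j => ⟨le_refl 0, zero_le_one⟩, fun i j => ?_⟩
      have : ∀ j' ∈ Finset.univ, W i j' = 0 := by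
        intro j' _
        have := (Finset.sum_eq_zero_iff_of_nonneg (fun j'' _ => hWpos i j'')).mp (hsz i)
        exact this j' (Finset.mem_univ j')
      rw [this j (Finset.mem_univ j)]; ring
  obtain ⟨t, htb, htW⟩ := ht
  -- binary expansion of each t j
  have hbin : ∀ j, ∃ (zj : Fin H → ℝ) (γj : ℝ), (∀ h, zj h = 0 ∨ zj h = 1) ∧
      0 ≤ γj ∧ γj ≤ (2:ℝ)⁻¹ ^ H ∧ t j = (∑ h, (2:ℝ)⁻¹ ^ (h.val + 1) * zj h) + γj :=
    fun j => binexp H (t j) (htb j).1 (htb j).2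
  choose z γ hz hγ0 hγ1 hteq using hbin
  refine ⟨z, γ, fun i j h => s i * z j h, fun i j => s i * γ j, hz, fun j => ⟨hγ0 j, hγ1 j⟩,
    ?_, ?_, ?_, ?_, ?_⟩
  · intro i j
    rw [htW i j, hteq j, mul_add, Finset.mul_sum]
    congr 1
    exact Finset.sum_congr rfl fun h _ => by ring
  · intro i j h
    rcases hz j h with h0 | h1
    · simp only [h0, mul_zero]
      exact ⟨le_rfl, le_rfl⟩
    · simp only [h1, mul_one]
      exact ⟨hsl i, hsu i⟩
  · intro i j h
    have hA : s i = ∑ j', W i j' := rfl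
    rcases hz j h with h0 | h1
    · simp only [h0, mul_zero]
      constructor
      · linarith [hsu i, hA]
      · linarith [hsl i, hA]
    · simp only [h1, mul_one]
      constructor
      · linarith [hsu i, hA]
      · linarith [hsl i, hA]
  · intro i j
    constructor
    · exact mul_le_mul_of_nonneg_right (hsl i) (hγ0 j)
    · exact mul_le_mul_of_nonneg_right (hsu i) (hγ0 j)
  · intro i j
    have hA : s i = ∑ j', W i j' := rfl
    have h2H : (0:ℝ) ≤ (2:ℝ)⁻¹ ^ H := by positivity
    constructor
    · nlinarith [hsu i, hγ1 j, hγ0 j, hA]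
    · nlinarith [hsl i, hγ1 j, hγ0 j, hA]
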